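/- β_Pool = β_F + Λδ, where Λ = (var[X_S])⁻¹ cov[X_S, U(S)] and δ is the vector of coefficients of U(S) in the least-squares projection of Y_S onto {1, U_1(S),…,U_{S̄−1}(S), X_S}; moreover δ_s = (α_s + β_sᵀμ_s) − (α_{S̄} + β_{S̄}ᵀμ_{S̄}) − β_Fᵀ(μ_s − μ_{S̄}) for s = 1,…,S̄−1. -/

import Mathlib

open MeasureTheory Matrix Finset

private lemma quad_coef_zero {c m : ℝ} (hm : 0 ≤ m)
    (h : ∀ t : ℝ, 0 ≤ 2 * t * c + t ^ 2 * m) : c = 0 := by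
  by_contra hc
  have h1 := h (-(c / (m + 1)))
  have hm1 : (0:ℝ) < m + 1 := by linarith
  have hc2 : (0:ℝ) < c ^ 2 := by positivity
  have hne : m + 1 ≠ 0 := hm1.ne'
  field_simp at h1
  nlinarith [mul_pos hc2 hm1, mul_pos (mul_pos hc2 hm1) hm1, mul_nonneg hc2.le hm]

private lemma integrable_mul_L2 {Ω : Type*} [MeasurableSpace Ω] {P : Measure Ω}
    {f g : Ω → ℝ} (hf : MemLp f 2 P) (hg : MemLp g 2 P) :
    Integrable (fun ω => f ω * g ω) P := by
  have hf2 : Integrable (fun ω => f ω ^ 2) P :=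
    (memLp_two_iff_integrable_sq hf.aestronglyMeasurable).mp hf
  have hg2 : Integrable (fun ω => g ω ^ 2) P :=
    (memLp_two_iff_integrable_sq hg.aestronglyMeasurable).mp hg
  refine Integrable.mono' (hf2.add hg2) (hf.aestronglyMeasurable.mul hg.aestronglyMeasurable)
    (Filter.Eventually.of_forall fun ω => ?_)
  have h1 : |f ω * g ω| ≤ f ω ^ 2 + g ω ^ 2 := by
    rcases abs_cases (f ω * g ω) with ⟨h, _⟩ | ⟨h, _⟩ <;>
      nlinarith [sq_nonneg (f ω - g ω), sq_nonneg (f ω + g ω)]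
  simpa [abs_mul] using h1

private lemma proj_orth {Ω : Type*} [MeasurableSpace Ω] (P : Measure Ω) {R φ : Ω → ℝ}
    (hR2 : Integrable (fun ω => R ω ^ 2) P)
    (hRφ : Integrable (fun ω => R ω * φ ω) P)
    (hφ2 : Integrable (fun ω => φ ω ^ 2) P)
    (hmin : ∀ t : ℝ, ∫ ω, (R ω) ^ 2 ∂P ≤ ∫ ω, (R ω + t * φ ω) ^ 2 ∂P) :
    ∫ ω, R ω * φ ω ∂P = 0 := by
  apply quad_coef_zero (integral_nonneg fun ω => sq_nonneg (φ ω))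
  intro t
  have hexp : (fun ω => (R ω + t * φ ω) ^ 2)
      = fun ω => R ω ^ 2 + ((2 * t) * (R ω * φ ω) + t ^ 2 * φ ω ^ 2) :=
    funext fun ω => by ring
  have i2 : Integrable (fun ω => 2 * t * (R ω * φ ω)) P := hRφ.const_mul (2 * t)
  have i3 : Integrable (fun ω => t ^ 2 * φ ω ^ 2) P := hφ2.const_mul (t ^ 2)
  have i1 : Integrable (fun ω => 2 * t * (R ω * φ ω) + t ^ 2 * φ ω ^ 2) P := i2.add i3
  have h := hmin t
  rw [hexp, integral_add hR2 i1, integral_add i2 i3, integral_const_mul, integral_const_mul] at h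
  linarith

/-- `β_Pool = β_F + Λδ`, where `Λ = var[X_S]⁻¹ cov[X_S, U(S)]` and `δ` is the coefficient
vector of `U(S)` in the least-squares projection of `Y_S` onto `{1, U(S), X_S}`; moreover
`δ_s = (α_s + β_sᵀμ_s) − (α_S̄ + β_S̄ᵀμ_S̄) − β_Fᵀ(μ_s − μ_S̄)`. -/
theorem stmt5
    {Ω : Type*} [MeasurableSpace Ω] (P : Measure Ω) [IsProbabilityMeasure P]
    (n d : ℕ) (S : Ω → Fin (n + 1)) (hS : Measurable S)
    (X : Ω → Fin d → ℝ) (Y : Ω → ℝ) (ε : Ω → ℝ)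
    (p : Fin (n + 1) → ℝ) (μv : Fin (n + 1) → Fin d → ℝ)
    (Sig : Fin (n + 1) → Matrix (Fin d) (Fin d) ℝ)
    (αb : Fin (n + 1) → ℝ) (βb : Fin (n + 1) → Fin d → ℝ)
    (hp : ∀ s, 0 < p s)
    (hmeas : ∀ s, P {ω | S ω = s} = ENNReal.ofReal (p s))
    (hmean : ∀ s i, ∫ ω in {ω | S ω = s}, X ω i ∂P = p s * μv s i)
    (hcovX : ∀ s i j,
      ∫ ω in {ω | S ω = s}, (X ω i - μv s i) * (X ω j - μv s j) ∂P = p s * Sig s i j)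
    (hSigPD : ∀ s, (Sig s).PosDef)
    (hY : ∀ ω, Y ω = αb (S ω) + βb (S ω) ⬝ᵥ X ω + ε ω)
    (hε : ∀ s, ∫ ω in {ω | S ω = s}, ε ω ∂P = 0)
    (hXε : ∀ s i, ∫ ω in {ω | S ω = s}, (X ω i - μv s i) * ε ω ∂P = 0)
    (μbar : Fin d → ℝ) (hμbar : μbar = ∑ s, p s • μv s)
    -- centered bank dummies
    (U : Fin n → Ω → ℝ)
    (hU : ∀ i ω, U i ω = (if S ω = i.castSucc then 1 else 0) - p i.castSucc)
    -- pooled coefficient: var[X_S]⁻¹ cov[X_S, Y_S]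
    (VarX : Matrix (Fin d) (Fin d) ℝ)
    (hVarX : ∀ i j, VarX i j =
      (∫ ω, X ω i * X ω j ∂P) - (∫ ω, X ω i ∂P) * (∫ ω, X ω j ∂P))
    (covXY : Fin d → ℝ)
    (hcovXY : ∀ i, covXY i =
      (∫ ω, X ω i * Y ω ∂P) - (∫ ω, X ω i ∂P) * (∫ ω, Y ω ∂P))
    (βPool : Fin d → ℝ) (hβPool : βPool = VarX⁻¹ *ᵥ covXY)
    -- FEO coefficient
    (βF : Fin d → ℝ)
    (hβF : βF = (∑ s, p s • Sig s)⁻¹ *ᵥ (∑ s, p s • (Sig s *ᵥ βb s)))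
    -- Λ = var[X_S]⁻¹ cov[X_S, U(S)]
    (covXU : Matrix (Fin d) (Fin n) ℝ)
    (hcovXU : ∀ i k, covXU i k =
      (∫ ω, X ω i * U k ω ∂P) - (∫ ω, X ω i ∂P) * (∫ ω, U k ω ∂P))
    (Λ : Matrix (Fin d) (Fin n) ℝ) (hΛ : Λ = VarX⁻¹ * covXU)
    -- δ : coefficients of U(S) in the projection of Y_S onto {1, U(S), X_S}
    (a0 : ℝ) (δ : Fin n → ℝ) (b0 : Fin d → ℝ)
    (hproj : ∀ (a : ℝ) (l : Fin n → ℝ) (b : Fin d → ℝ),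
      ∫ ω, (a0 + (∑ k, δ k * U k ω) + b0 ⬝ᵥ X ω - Y ω) ^ 2 ∂P
        ≤ ∫ ω, (a + (∑ k, l k * U k ω) + b ⬝ᵥ X ω - Y ω) ^ 2 ∂P)
    (hint : ∀ (a : ℝ) (l : Fin n → ℝ) (b : Fin d → ℝ),
      Integrable (fun ω => (a + (∑ k, l k * U k ω) + b ⬝ᵥ X ω - Y ω) ^ 2) P) :
    βPool = βF + Λ *ᵥ δ ∧
      ∀ k : Fin n, δ k =
        (αb k.castSucc + βb k.castSucc ⬝ᵥ μv k.castSucc)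
          - (αb (Fin.last n) + βb (Fin.last n) ⬝ᵥ μv (Fin.last n))
          - βF ⬝ᵥ (μv k.castSucc - μv (Fin.last n)) := by
  classical
  -- ## fibers of S
  have hAm : ∀ s : Fin (n+1), MeasurableSet {ω | S ω = s} :=
    fun s => hS (measurableSet_singleton s)
  have hdisj : Pairwise (Function.onFun Disjoint (fun s : Fin (n+1) => {ω | S ω = s})) := by
    intro s t hst
    refine Set.disjoint_left.mpr fun ω h1 h2 => hst ?_
    exact (h1 : S ω = s).symm.trans (h2 : S ω = t)
  have hunion : (⋃ s : Fin (n+1), {ω | S ω = s}) = Set.univ := by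
    ext ω; simp
  have hPr : ∀ s, (P {ω | S ω = s}).toReal = p s := fun s => by
    rw [hmeas s, ENNReal.toReal_ofReal (hp s).le]
  have hpsum : ∑ s, p s = 1 := by
    have h1 : ∑ s, P {ω | S ω = s} = 1 := by
      rw [← tsum_fintype (L := .unconditional _), ← measure_iUnion hdisj hAm, hunion, measure_univ]
    calc ∑ s, p s = ∑ s, (P {ω | S ω = s}).toReal :=
          Finset.sum_congr rfl fun s _ => (hPr s).symm
      _ = (∑ s, P {ω | S ω = s}).toReal :=
          (ENNReal.toReal_sum fun s _ => by rw [hmeas s]; exact ENNReal.ofReal_ne_top).symm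
      _ = 1 := by rw [h1]; rfl
  have hsplit : ∀ f : Ω → ℝ, Integrable f P →
      ∫ ω, f ω ∂P = ∑ s, ∫ ω in {ω | S ω = s}, f ω ∂P := by
    intro f hf
    rw [← setIntegral_univ, ← hunion,
      integral_iUnion_fintype hAm hdisj fun s => hf.integrableOn]
  have hconst : ∀ (s : Fin (n+1)) (c : ℝ), ∫ _ω in {ω | S ω = s}, c ∂P = p s * c := by
    intro s c; rw [setIntegral_const, measureReal_def, hPr s, smul_eq_mul]
  -- ## integrability and L² membership
  have hdot1 : ∀ (c : ℝ) (i : Fin d) (v : Fin d → ℝ),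
      (fun j => if j = i then c else 0) ⬝ᵥ v = c * v i := by
    intro c i v
    simp [dotProduct, ite_mul]
  have hYsq : Integrable (fun ω => Y ω ^ 2) P := by simpa using hint 0 0 0
  have h1mY : Integrable (fun ω => (1 - Y ω) ^ 2) P := by simpa using hint 1 0 0
  have hYint : Integrable Y P := by
    have h2 : Integrable (fun ω => ((1:ℝ) - ((1 - Y ω) ^ 2 - Y ω ^ 2)) * (1/2)) P :=
      ((integrable_const (1:ℝ)).sub (h1mY.sub hYsq)).mul_const _
    have h3 : (fun ω => ((1:ℝ) - ((1 - Y ω) ^ 2 - Y ω ^ 2)) * (1/2)) = Y :=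
      funext fun ω => by ring
    rwa [h3] at h2
  have hYL2 : MemLp Y 2 P := (memLp_two_iff_integrable_sq hYint.aestronglyMeasurable).mpr hYsq
  have hXmY2 : ∀ i, Integrable (fun ω => (X ω i - Y ω) ^ 2) P := by
    intro i
    have h := hint 0 0 (fun j => if j = i then 1 else 0)
    simpa [hdot1] using h
  have h2XmY2 : ∀ i, Integrable (fun ω => (2 * X ω i - Y ω) ^ 2) P := by
    intro i
    have h := hint 0 0 (fun j => if j = i then 2 else 0)
    simpa [hdot1] using h
  have hXsq : ∀ i, Integrable (fun ω => X ω i ^ 2) P := by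
    intro i
    have h2 : Integrable
        (fun ω => (((2 * X ω i - Y ω) ^ 2 - 2 * (X ω i - Y ω) ^ 2) + Y ω ^ 2) * (1/2)) P :=
      (((h2XmY2 i).sub ((hXmY2 i).const_mul 2)).add hYsq).mul_const _
    have h3 : (fun ω => (((2 * X ω i - Y ω) ^ 2 - 2 * (X ω i - Y ω) ^ 2) + Y ω ^ 2) * (1/2))
        = fun ω => X ω i ^ 2 := funext fun ω => by ring
    rwa [h3] at h2
  have h1XmY2 : ∀ i, Integrable (fun ω => (1 + (X ω i - Y ω)) ^ 2) P := by
    intro i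
    have h := hint 1 0 (fun j => if j = i then 1 else 0)
    have h3 : (fun ω => ((1:ℝ) + (∑ k, (0:Fin n → ℝ) k * U k ω)
          + (fun j => if j = i then (1:ℝ) else 0) ⬝ᵥ X ω - Y ω) ^ 2)
        = fun ω => (1 + (X ω i - Y ω)) ^ 2 := by
      funext ω; rw [hdot1]; simp; ring_nf
    rwa [h3] at h
  have hXint : ∀ i, Integrable (fun ω => X ω i) P := by
    intro i
    have h2 : Integrable
        (fun ω => ((((1 + (X ω i - Y ω)) ^ 2 - (X ω i - Y ω) ^ 2) - 1) * (1/2)) + Y ω) P :=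
      ((((h1XmY2 i).sub (hXmY2 i)).sub (integrable_const 1)).mul_const _).add hYint
    have h3 : (fun ω => ((((1 + (X ω i - Y ω)) ^ 2 - (X ω i - Y ω) ^ 2) - 1) * (1/2)) + Y ω)
        = fun ω => X ω i := funext fun ω => by ring
    rwa [h3] at h2
  have hXL2 : ∀ i, MemLp (fun ω => X ω i) 2 P := fun i =>
    (memLp_two_iff_integrable_sq (hXint i).aestronglyMeasurable).mpr (hXsq i)
  have hUL2 : ∀ k, MemLp (U k) 2 P := by
    intro k
    have hUk : U k = fun ω => (if S ω = k.castSucc then (1:ℝ) else 0) - p k.castSucc :=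
      funext fun ω => hU k ω
    have hm : Measurable (U k) := by
      rw [hUk]
      exact (Measurable.ite (hS (measurableSet_singleton _)) measurable_const
        measurable_const).sub measurable_const
    refine MemLp.of_bound hm.aestronglyMeasurable (1 + |p k.castSucc|)
      (Filter.Eventually.of_forall fun ω => ?_)
    rw [hUk]
    simp only [Real.norm_eq_abs]
    have h5 : |(if S ω = k.castSucc then (1:ℝ) else 0) - p k.castSucc|
        ≤ |(if S ω = k.castSucc then (1:ℝ) else 0)| + |p k.castSucc| := by
      rw [sub_eq_add_neg]
      exact (abs_add_le _ _).trans (by rw [abs_neg])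
    have h4 : |(if S ω = k.castSucc then (1:ℝ) else 0)| ≤ 1 := by split_ifs <;> simp
    linarith
  have hUint : ∀ k, Integrable (U k) P := fun k => (hUL2 k).integrable one_le_two
  set Rf : Ω → ℝ := fun ω => a0 + (∑ k, δ k * U k ω) + b0 ⬝ᵥ X ω - Y ω with hRf
  have hsU : MemLp (fun ω => ∑ k, δ k * U k ω) 2 P :=
    memLp_finset_sum _ fun k _ => (hUL2 k).const_mul (δ k)
  have hsX : MemLp (fun ω => ∑ i, b0 i * X ω i) 2 P :=
    memLp_finset_sum _ fun i _ => (hXL2 i).const_mul (b0 i)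
  have hRL2 : MemLp Rf 2 P := by
    have h := (((memLp_const a0).add hsU).add hsX).sub hYL2
    have heq : ((((fun _ => a0) + fun ω => ∑ k, δ k * U k ω) + fun ω => ∑ i, b0 i * X ω i) - Y)
        = Rf := by
      funext ω; simp [hRf, dotProduct]
    rwa [heq] at h
  have hRsq : Integrable (fun ω => Rf ω ^ 2) P := by
    simpa [pow_two] using integrable_mul_L2 hRL2 hRL2
  have hRint : Integrable Rf P := hRL2.integrable one_le_two
  have hRX : ∀ i, Integrable (fun ω => Rf ω * X ω i) P :=
    fun i => integrable_mul_L2 hRL2 (hXL2 i)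
  have hRU : ∀ k, Integrable (fun ω => Rf ω * U k ω) P :=
    fun k => integrable_mul_L2 hRL2 (hUL2 k)
  have hXX : ∀ i j, Integrable (fun ω => X ω i * X ω j) P :=
    fun i j => integrable_mul_L2 (hXL2 i) (hXL2 j)
  have hXY : ∀ i, Integrable (fun ω => X ω i * Y ω) P :=
    fun i => integrable_mul_L2 (hXL2 i) hYL2
  have hXU : ∀ i k, Integrable (fun ω => X ω i * U k ω) P :=
    fun i k => integrable_mul_L2 (hXL2 i) (hUL2 k)
  have hUsq : ∀ k, Integrable (fun ω => U k ω ^ 2) P :=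
    fun k => by simpa [pow_two] using integrable_mul_L2 (hUL2 k) (hUL2 k)
  -- ## orthogonality of the residual
  have horthc : ∫ ω, Rf ω ∂P = 0 := by
    have h := proj_orth P hRsq
      (by simpa using integrable_mul_L2 hRL2 (memLp_const (1:ℝ)))
      (by simpa using (integrable_const (1:ℝ) : Integrable (fun _ : Ω => (1:ℝ)) P))
      (φ := fun _ => (1:ℝ)) ?_
    · simpa using h
    · intro t
      have h2 := hproj (a0 + t) δ b0
      have hL : (fun ω => (a0 + (∑ k, δ k * U k ω) + b0 ⬝ᵥ X ω - Y ω) ^ 2)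
          = fun ω => Rf ω ^ 2 := funext fun ω => by simp only [hRf]
      have h3 : (fun ω => (a0 + t + (∑ k, δ k * U k ω) + b0 ⬝ᵥ X ω - Y ω) ^ 2)
          = fun ω => (Rf ω + t * 1) ^ 2 := funext fun ω => by simp only [hRf]; ring
      rw [hL, h3] at h2
      exact h2
  have hsumU : ∀ (t : ℝ) (k : Fin n) (ω : Ω),
      ∑ j, (δ j + t * (if j = k then 1 else 0)) * U j ω
        = (∑ j, δ j * U j ω) + t * U k ω := by
    intro t k ω
    have h1 : ∀ j : Fin n, (δ j + t * (if j = k then (1:ℝ) else 0)) * U j ω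
        = δ j * U j ω + (if j = k then t * U j ω else 0) := by
      intro j; split_ifs <;> ring
    rw [Finset.sum_congr rfl fun j _ => h1 j, Finset.sum_add_distrib,
      Finset.sum_ite_eq' Finset.univ k (fun j => t * U j ω)]
    simp
  have horthU : ∀ k, ∫ ω, Rf ω * U k ω ∂P = 0 := by
    intro k
    refine proj_orth P hRsq (hRU k) (hUsq k) ?_
    intro t
    have h2 := hproj a0 (fun j => δ j + t * (if j = k then 1 else 0)) b0
    have hL : (fun ω => (a0 + (∑ kk, δ kk * U kk ω) + b0 ⬝ᵥ X ω - Y ω) ^ 2)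
        = fun ω => Rf ω ^ 2 := funext fun ω => by simp only [hRf]
    have h3 : (fun ω => (a0 + (∑ j, (δ j + t * (if j = k then 1 else 0)) * U j ω)
          + b0 ⬝ᵥ X ω - Y ω) ^ 2)
        = fun ω => (Rf ω + t * U k ω) ^ 2 :=
      funext fun ω => by rw [hsumU t k ω]; simp only [hRf]; ring
    rw [hL, h3] at h2
    exact h2
  have hsumX : ∀ (t : ℝ) (i : Fin d) (ω : Ω),
      (fun j => b0 j + t * (if j = i then 1 else 0)) ⬝ᵥ X ω = b0 ⬝ᵥ X ω + t * X ω i := by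
    intro t i ω
    simp only [dotProduct]
    have h1 : ∀ j : Fin d, (b0 j + t * (if j = i then (1:ℝ) else 0)) * X ω j
        = b0 j * X ω j + (if j = i then t * X ω j else 0) := by
      intro j; split_ifs <;> ring
    rw [Finset.sum_congr rfl fun j _ => h1 j, Finset.sum_add_distrib,
      Finset.sum_ite_eq' Finset.univ i (fun j => t * X ω j)]
    simp
  have horthX : ∀ i, ∫ ω, Rf ω * X ω i ∂P = 0 := by
    intro i
    refine proj_orth P hRsq (hRX i) (hXsq i) ?_
    intro t
    have h2 := hproj a0 δ (fun j => b0 j + t * (if j = i then 1 else 0))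
    have hL : (fun ω => (a0 + (∑ kk, δ kk * U kk ω) + b0 ⬝ᵥ X ω - Y ω) ^ 2)
        = fun ω => Rf ω ^ 2 := funext fun ω => by simp only [hRf]
    have h3 : (fun ω => (a0 + (∑ k, δ k * U k ω)
          + (fun j => b0 j + t * (if j = i then 1 else 0)) ⬝ᵥ X ω - Y ω) ^ 2)
        = fun ω => (Rf ω + t * X ω i) ^ 2 :=
      funext fun ω => by rw [hsumX t i ω]; simp only [hRf]; ring
    rw [hL, h3] at h2
    exact h2
  -- ## group-level moment computations
  have haff : ∀ s : Fin (n+1), Integrable (fun ω => αb s + ∑ j, βb s j * X ω j) P :=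
    fun s => (integrable_const (αb s)).add
      (integrable_finset_sum _ fun j _ => (hXint j).const_mul (βb s j))
  have hεon : ∀ s : Fin (n+1), IntegrableOn ε {ω | S ω = s} P := by
    intro s
    refine IntegrableOn.congr_fun
      ((hYint.integrableOn).sub ((haff s).integrableOn)) ?_ (hAm s)
    intro ω hω
    have hsω : S ω = s := hω
    simp only [Pi.sub_apply]
    rw [hY ω, hsω]
    have h2 : βb s ⬝ᵥ X ω = ∑ j, βb s j * X ω j := rfl
    rw [h2]; ring
  have hXεon : ∀ (s : Fin (n+1)) (i : Fin d),
      IntegrableOn (fun ω => X ω i * ε ω) {ω | S ω = s} P := by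
    intro s i
    have hglob : Integrable
        (fun ω => X ω i * Y ω - (αb s * X ω i + ∑ j, βb s j * (X ω i * X ω j))) P :=
      (hXY i).sub (((hXint i).const_mul (αb s)).add
        (integrable_finset_sum _ fun j _ => (hXX i j).const_mul (βb s j)))
    refine IntegrableOn.congr_fun hglob.integrableOn ?_ (hAm s)
    intro ω hω
    have hsω : S ω = s := hω
    simp only [hY, hsω]
    have h2 : X ω i * (βb s ⬝ᵥ X ω) = ∑ j, βb s j * (X ω i * X ω j) := by
      rw [dotProduct, Finset.mul_sum]
      exact Finset.sum_congr rfl fun j _ => by ring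
    rw [mul_add, mul_add, h2]; ring
  have hXXg : ∀ (s : Fin (n+1)) i j,
      ∫ ω in {ω | S ω = s}, X ω i * X ω j ∂P = p s * (Sig s i j + μv s i * μv s j) := by
    intro s i j
    have h := hcovX s i j
    have hcg : ∫ ω in {ω | S ω = s}, (X ω i - μv s i) * (X ω j - μv s j) ∂P
        = ∫ ω in {ω | S ω = s},
            (X ω i * X ω j - (μv s j * X ω i + (μv s i * X ω j - μv s i * μv s j))) ∂P :=
      setIntegral_congr_fun (hAm s) fun ω _ => by ring
    have hI2 : IntegrableOn (fun ω => μv s i * X ω j - μv s i * μv s j) {ω | S ω = s} P :=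
      (((hXint j).const_mul (μv s i)).sub (integrable_const _)).integrableOn
    have hI3 : IntegrableOn
        (fun ω => μv s j * X ω i + (μv s i * X ω j - μv s i * μv s j)) {ω | S ω = s} P :=
      (((hXint i).const_mul (μv s j)).add
        (((hXint j).const_mul (μv s i)).sub (integrable_const _))).integrableOn
    rw [hcg, integral_sub ((hXX i j).integrableOn) hI3,
      integral_add (((hXint i).const_mul (μv s j)).integrableOn) hI2,
      integral_sub (((hXint j).const_mul (μv s i)).integrableOn)
        ((integrable_const (μv s i * μv s j)).integrableOn),
      integral_const_mul, integral_const_mul, hmean s i, hmean s j, hconst s] at h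
    nlinarith [h]
  have hXεg : ∀ (s : Fin (n+1)) (i : Fin d), ∫ ω in {ω | S ω = s}, X ω i * ε ω ∂P = 0 := by
    intro s i
    have h := hXε s i
    have hcg : ∫ ω in {ω | S ω = s}, (X ω i - μv s i) * ε ω ∂P
        = ∫ ω in {ω | S ω = s}, (X ω i * ε ω - μv s i * ε ω) ∂P :=
      setIntegral_congr_fun (hAm s) fun ω _ => by ring
    rw [hcg, integral_sub (hXεon s i) ((hεon s).const_mul (μv s i)),
      integral_const_mul, hε s, mul_zero, sub_zero] at h
    exact h
  -- the fitted group-mean discrepancies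
  set E : Fin (n+1) → ℝ := fun s =>
    a0 + (∑ k, δ k * ((if s = k.castSucc then (1:ℝ) else 0) - p k.castSucc))
      + b0 ⬝ᵥ μv s - (αb s + βb s ⬝ᵥ μv s) with hE
  have hRg : ∀ s : Fin (n+1), ∫ ω in {ω | S ω = s}, Rf ω ∂P = p s * E s := by
    intro s
    have hcg : ∫ ω in {ω | S ω = s}, Rf ω ∂P
        = ∫ ω in {ω | S ω = s},
            ((a0 + (∑ k, δ k * ((if s = k.castSucc then (1:ℝ) else 0) - p k.castSucc)) - αb s)
              + ((∑ i, (b0 i - βb s i) * X ω i) - ε ω)) ∂P := by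
      refine setIntegral_congr_fun (hAm s) fun ω hω => ?_
      have hsω : S ω = s := hω
      simp only [hRf]
      rw [hY ω, hsω]
      have h1 : (∑ k, δ k * U k ω)
          = ∑ k, δ k * ((if s = k.castSucc then (1:ℝ) else 0) - p k.castSucc) :=
        Finset.sum_congr rfl fun k _ => by rw [hU k ω, hsω]
      have h2 : b0 ⬝ᵥ X ω - βb s ⬝ᵥ X ω = ∑ i, (b0 i - βb s i) * X ω i := by
        rw [dotProduct, dotProduct, ← Finset.sum_sub_distrib]
        exact Finset.sum_congr rfl fun i _ => by ring
      rw [h1]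
      linear_combination h2
    have hint2 : IntegrableOn (fun ω => ∑ i, (b0 i - βb s i) * X ω i) {ω | S ω = s} P :=
      (integrable_finset_sum _ fun i _ => (hXint i).const_mul (b0 i - βb s i)).integrableOn
    have hint3 : IntegrableOn (fun ω => (∑ i, (b0 i - βb s i) * X ω i) - ε ω) {ω | S ω = s} P :=
      hint2.sub (hεon s)
    rw [hcg, integral_add ((integrable_const _).integrableOn) hint3,
      integral_sub hint2 (hεon s), integral_finset_sum _
        (fun i _ => ((hXint i).const_mul (b0 i - βb s i)).integrableOn),
      hconst s, hε s]
    have h3 : ∑ i, ∫ ω in {ω | S ω = s}, (b0 i - βb s i) * X ω i ∂P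
        = p s * (b0 ⬝ᵥ μv s - βb s ⬝ᵥ μv s) := by
      have h4 : ∀ i : Fin d, ∫ ω in {ω | S ω = s}, (b0 i - βb s i) * X ω i ∂P
          = (b0 i - βb s i) * (p s * μv s i) := fun i => by
        rw [integral_const_mul, hmean s i]
      rw [Finset.sum_congr rfl fun i _ => h4 i]
      rw [dotProduct, dotProduct, ← Finset.sum_sub_distrib, Finset.mul_sum]
      exact Finset.sum_congr rfl fun i _ => by ring
    rw [h3, hE]
    ring
  have hRUg : ∀ (s : Fin (n+1)) (k : Fin n),
      ∫ ω in {ω | S ω = s}, Rf ω * U k ω ∂P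
        = ((if s = k.castSucc then (1:ℝ) else 0) - p k.castSucc) * (p s * E s) := by
    intro s k
    have hcg : ∫ ω in {ω | S ω = s}, Rf ω * U k ω ∂P
        = ∫ ω in {ω | S ω = s},
            ((if s = k.castSucc then (1:ℝ) else 0) - p k.castSucc) * Rf ω ∂P := by
      refine setIntegral_congr_fun (hAm s) fun ω hω => ?_
      have hsω : S ω = s := hω
      rw [hU k ω, hsω]; ring
    rw [hcg, integral_const_mul, hRg s]
  have hRXg : ∀ (s : Fin (n+1)) (i : Fin d),
      ∫ ω in {ω | S ω = s}, Rf ω * X ω i ∂P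
        = p s * (μv s i * E s + (Sig s *ᵥ (b0 - βb s)) i) := by
    intro s i
    have hcg : ∫ ω in {ω | S ω = s}, Rf ω * X ω i ∂P
        = ∫ ω in {ω | S ω = s},
            ((a0 + (∑ k, δ k * ((if s = k.castSucc then (1:ℝ) else 0) - p k.castSucc)) - αb s)
                * X ω i
              + ((∑ j, (b0 j - βb s j) * (X ω j * X ω i)) - X ω i * ε ω)) ∂P := by
      refine setIntegral_congr_fun (hAm s) fun ω hω => ?_
      have hsω : S ω = s := hω
      simp only [hRf]
      rw [hY ω, hsω]
      have h1 : (∑ k, δ k * U k ω)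
          = ∑ k, δ k * ((if s = k.castSucc then (1:ℝ) else 0) - p k.castSucc) :=
        Finset.sum_congr rfl fun k _ => by rw [hU k ω, hsω]
      have h2 : (b0 ⬝ᵥ X ω - βb s ⬝ᵥ X ω) * X ω i = ∑ j, (b0 j - βb s j) * (X ω j * X ω i) := by
        rw [dotProduct, dotProduct, ← Finset.sum_sub_distrib, Finset.sum_mul]
        exact Finset.sum_congr rfl fun j _ => by ring
      rw [h1]
      linear_combination h2
    have hint2 : IntegrableOn (fun ω => ∑ j, (b0 j - βb s j) * (X ω j * X ω i))
        {ω | S ω = s} P :=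
      (integrable_finset_sum _ fun j _ => (hXX j i).const_mul (b0 j - βb s j)).integrableOn
    have hint3 : IntegrableOn
        (fun ω => (∑ j, (b0 j - βb s j) * (X ω j * X ω i)) - X ω i * ε ω) {ω | S ω = s} P :=
      hint2.sub (hXεon s i)
    rw [hcg, integral_add (((hXint i).const_mul _).integrableOn) hint3,
      integral_sub hint2 (hXεon s i), integral_finset_sum _
        (fun j _ => ((hXX j i).const_mul (b0 j - βb s j)).integrableOn),
      integral_const_mul, hmean s i, hXεg s i, sub_zero]
    have h3 : ∑ j, ∫ ω in {ω | S ω = s}, (b0 j - βb s j) * (X ω j * X ω i) ∂P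
        = p s * ((Sig s *ᵥ (b0 - βb s)) i + μv s i * (b0 ⬝ᵥ μv s - βb s ⬝ᵥ μv s)) := by
      have h4 : ∀ j : Fin d, ∫ ω in {ω | S ω = s}, (b0 j - βb s j) * (X ω j * X ω i) ∂P
          = (b0 j - βb s j) * (p s * (Sig s i j + μv s j * μv s i)) := by
        intro j
        rw [integral_const_mul, hXXg s j i]
        have h5 : Sig s j i = Sig s i j := by
          have ha := hcovX s i j
          have hb := hcovX s j i
          have hc : ∫ ω in {ω | S ω = s}, (X ω j - μv s j) * (X ω i - μv s i) ∂P
              = ∫ ω in {ω | S ω = s}, (X ω i - μv s i) * (X ω j - μv s j) ∂P :=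
            setIntegral_congr_fun (hAm s) fun ω _ => by ring
          rw [ha, hb] at hc
          exact mul_left_cancel₀ (hp s).ne' hc
        rw [h5]
      rw [Finset.sum_congr rfl fun j _ => h4 j]
      have h6 : (Sig s *ᵥ (b0 - βb s)) i = ∑ j, Sig s i j * (b0 j - βb s j) := by
        simp [Matrix.mulVec, dotProduct]
      have h7 : b0 ⬝ᵥ μv s - βb s ⬝ᵥ μv s = ∑ j, (b0 j - βb s j) * μv s j := by
        rw [dotProduct, dotProduct, ← Finset.sum_sub_distrib]
        exact Finset.sum_congr rfl fun j _ => by ring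
      rw [h6, h7]
      rw [Finset.sum_congr rfl fun j _ =>
        show (b0 j - βb s j) * (p s * (Sig s i j + μv s j * μv s i))
            = p s * (Sig s i j * (b0 j - βb s j)) + p s * (μv s i * ((b0 j - βb s j) * μv s j))
          from by ring]
      rw [Finset.sum_add_distrib, ← Finset.mul_sum, ← Finset.mul_sum, ← Finset.mul_sum]
      ring
    rw [h3, hE]
    ring
  -- ## the E-system: all group discrepancies vanish
  have hsumE : ∑ s, p s * E s = 0 := by
    have h := horthc
    rw [hsplit Rf hRint, Finset.sum_congr rfl fun s _ => hRg s] at h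
    exact h
  have hEc : ∀ k : Fin n, E k.castSucc = 0 := by
    intro k
    have h := horthU k
    rw [hsplit _ (hRU k), Finset.sum_congr rfl fun s _ => hRUg s k] at h
    have ha : ∀ s : Fin (n+1),
        ((if s = k.castSucc then (1:ℝ) else 0) - p k.castSucc) * (p s * E s)
          = (if s = k.castSucc then p s * E s else 0) - p k.castSucc * (p s * E s) := by
      intro s; split_ifs <;> ring
    rw [Finset.sum_congr rfl fun s _ => ha s, Finset.sum_sub_distrib,
      Finset.sum_ite_eq' Finset.univ k.castSucc (fun s => p s * E s),
      ← Finset.mul_sum, hsumE, mul_zero, sub_zero, if_pos (Finset.mem_univ _)] at h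
    rcases mul_eq_zero.mp h with h' | h'
    · exact absurd h' (hp _).ne'
    · exact h'
  have hElast : E (Fin.last n) = 0 := by
    have h := hsumE
    rw [Fin.sum_univ_castSucc, Finset.sum_congr rfl
      (fun k (_ : k ∈ Finset.univ) => by rw [hEc k, mul_zero]),
      Finset.sum_const_zero, zero_add] at h
    rcases mul_eq_zero.mp h with h' | h'
    · exact absurd h' (hp _).ne'
    · exact h'
  have hEall : ∀ s, E s = 0 := fun s => Fin.lastCases hElast hEc s
  -- ## symmetry of Sig and positive definiteness of the within matrix
  have hSigSymm : ∀ (s : Fin (n+1)) i j, Sig s i j = Sig s j i := by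
    intro s i j
    have ha := hcovX s i j
    have hb := hcovX s j i
    have hc : ∫ ω in {ω | S ω = s}, (X ω i - μv s i) * (X ω j - μv s j) ∂P
        = ∫ ω in {ω | S ω = s}, (X ω j - μv s j) * (X ω i - μv s i) ∂P :=
      setIntegral_congr_fun (hAm s) fun ω _ => by ring
    rw [ha, hb] at hc
    exact mul_left_cancel₀ (hp s).ne' hc
  have hWx : ∀ (x : Fin d → ℝ) (i : Fin d),
      ((∑ s, p s • Sig s) *ᵥ x) i = ∑ s, p s * ((Sig s *ᵥ x) i) := by
    intro x i
    simp only [Matrix.mulVec, dotProduct, Matrix.sum_apply, Matrix.smul_apply, smul_eq_mul,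
      Finset.sum_mul, Finset.mul_sum]
    rw [Finset.sum_comm]
    exact Finset.sum_congr rfl fun a _ => Finset.sum_congr rfl fun b _ => by ring
  have hWpd : (∑ s, p s • Sig s).PosDef := by
    rw [posDef_iff_dotProduct_mulVec]
    constructor
    · show (∑ s, p s • Sig s)ᴴ = ∑ s, p s • Sig s
      apply Matrix.ext; intro i j
      simp only [Matrix.conjTranspose_apply, Matrix.sum_apply, Matrix.smul_apply,
        smul_eq_mul, star_trivial]
      exact Finset.sum_congr rfl fun s _ => by rw [hSigSymm s j i]
    · intro x hx
      have hxs : star x = x := by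
        funext i; simp
      rw [hxs]
      have hexp : (∑ s, p s • Sig s) *ᵥ x = fun i => ∑ s, p s * ((Sig s *ᵥ x) i) :=
        funext fun i => hWx x i
      rw [hexp]
      have hdp : (x ⬝ᵥ fun i => ∑ s, p s * ((Sig s *ᵥ x) i))
          = ∑ s, p s * (x ⬝ᵥ (Sig s *ᵥ x)) := by
        simp only [dotProduct, Finset.mul_sum]
        rw [Finset.sum_comm]
        exact Finset.sum_congr rfl fun s _ => Finset.sum_congr rfl fun i _ => by ring
      rw [hdp]
      refine Finset.sum_pos (fun s _ => mul_pos (hp s) ?_) Finset.univ_nonempty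
      have h := (hSigPD s).dotProduct_mulVec_pos hx
      rwa [hxs] at h
  have hb0 : b0 = βF := by
    have hXR0 : ∀ i, ∑ s, p s * ((Sig s *ᵥ (b0 - βb s)) i) = 0 := by
      intro i
      have h := horthX i
      rw [hsplit _ (hRX i), Finset.sum_congr rfl fun s _ => hRXg s i] at h
      have h2 : ∀ s, p s * (μv s i * E s + (Sig s *ᵥ (b0 - βb s)) i)
          = p s * ((Sig s *ᵥ (b0 - βb s)) i) := fun s => by rw [hEall s]; ring
      rwa [Finset.sum_congr rfl fun s _ => h2 s] at h
    have hkey : (∑ s, p s • Sig s) *ᵥ b0 = ∑ s, p s • (Sig s *ᵥ βb s) := by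
      funext i
      have h := hXR0 i
      have h4 : ∀ s : Fin (n+1), p s * ((Sig s *ᵥ (b0 - βb s)) i)
          = p s * ((Sig s *ᵥ b0) i) - p s * ((Sig s *ᵥ βb s) i) := fun s => by
        rw [Matrix.mulVec_sub, Pi.sub_apply]; ring
      rw [Finset.sum_congr rfl fun s _ => h4 s, Finset.sum_sub_distrib, sub_eq_zero] at h
      rw [hWx b0 i]
      rw [h]
      rw [Finset.sum_apply]
      exact Finset.sum_congr rfl fun s _ => by rw [Pi.smul_apply, smul_eq_mul]
    rw [hβF, ← hkey, Matrix.mulVec_mulVec, Matrix.nonsing_inv_mul _ hWpd.det_pos.ne'.isUnit,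
      Matrix.one_mulVec]
  -- ## entries of VarX and its positive definiteness
  have hEXi : ∀ i, ∫ ω, X ω i ∂P = ∑ s, p s * μv s i := fun i => by
    rw [hsplit _ (hXint i)]; exact Finset.sum_congr rfl fun s _ => hmean s i
  have hEXXij : ∀ i j, ∫ ω, X ω i * X ω j ∂P
      = ∑ s, p s * (Sig s i j + μv s i * μv s j) := fun i j => by
    rw [hsplit _ (hXX i j)]; exact Finset.sum_congr rfl fun s _ => hXXg s i j
  have hVe : ∀ i j, VarX i j = (∑ s, p s * Sig s i j)
      + ((∑ s, p s * (μv s i * μv s j)) - (∑ s, p s * μv s i) * (∑ s, p s * μv s j)) := by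
    intro i j
    rw [hVarX i j, hEXXij i j, hEXi i, hEXi j]
    have h1 : ∑ s, p s * (Sig s i j + μv s i * μv s j)
        = ∑ s, p s * Sig s i j + ∑ s, p s * (μv s i * μv s j) := by
      rw [← Finset.sum_add_distrib]; exact Finset.sum_congr rfl fun s _ => by ring
    rw [h1]; ring
  set B : Matrix (Fin d) (Fin d) ℝ := Matrix.of fun i j =>
    (∑ s, p s * (μv s i * μv s j)) - (∑ s, p s * μv s i) * (∑ s, p s * μv s j) with hB
  have e2 : ∀ x : Fin d → ℝ, ∑ j, (∑ s, p s * μv s j) * x j = ∑ s, p s * (μv s ⬝ᵥ x) := by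
    intro x
    simp only [Finset.sum_mul]
    rw [Finset.sum_comm]
    refine Finset.sum_congr rfl fun s _ => ?_
    rw [dotProduct, Finset.mul_sum]
    exact Finset.sum_congr rfl fun j _ => by ring
  have hBq : ∀ x : Fin d → ℝ, x ⬝ᵥ (B *ᵥ x)
      = (∑ s, p s * ((μv s ⬝ᵥ x) * (μv s ⬝ᵥ x)))
        - (∑ s, p s * (μv s ⬝ᵥ x)) * (∑ s, p s * (μv s ⬝ᵥ x)) := by
    intro x
    have e1 : ∀ i, ∑ j, (∑ s, p s * (μv s i * μv s j)) * x j
        = ∑ s, p s * (μv s i * (μv s ⬝ᵥ x)) := by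
      intro i
      simp only [Finset.sum_mul]
      rw [Finset.sum_comm]
      refine Finset.sum_congr rfl fun s _ => ?_
      rw [dotProduct, Finset.mul_sum, Finset.mul_sum]
      exact Finset.sum_congr rfl fun j _ => by ring
    have hBx : ∀ i, (B *ᵥ x) i = (∑ s, p s * (μv s i * (μv s ⬝ᵥ x)))
        - (∑ s, p s * μv s i) * (∑ s, p s * (μv s ⬝ᵥ x)) := by
      intro i
      calc (B *ᵥ x) i
          = ∑ j, ((∑ s, p s * (μv s i * μv s j))
              - (∑ s, p s * μv s i) * (∑ s, p s * μv s j)) * x j := by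
            simp [Matrix.mulVec, dotProduct, hB]
        _ = (∑ j, (∑ s, p s * (μv s i * μv s j)) * x j)
              - (∑ s, p s * μv s i) * ∑ j, (∑ s, p s * μv s j) * x j := by
            rw [Finset.mul_sum, ← Finset.sum_sub_distrib]
            exact Finset.sum_congr rfl fun j _ => by ring
        _ = _ := by rw [e1 i, e2 x]
    have e3 : ∑ i, x i * (∑ s, p s * (μv s i * (μv s ⬝ᵥ x)))
        = ∑ s, p s * ((μv s ⬝ᵥ x) * (μv s ⬝ᵥ x)) := by
      simp only [Finset.mul_sum]
      rw [Finset.sum_comm]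
      refine Finset.sum_congr rfl fun s _ => ?_
      have h5 : ∑ i, x i * (p s * (μv s i * (μv s ⬝ᵥ x)))
          = p s * (μv s ⬝ᵥ x) * ∑ i, μv s i * x i := by
        rw [Finset.mul_sum]
        exact Finset.sum_congr rfl fun i _ => by ring
      rw [h5]
      rw [show ∑ i, μv s i * x i = μv s ⬝ᵥ x from rfl]
      ring
    calc x ⬝ᵥ (B *ᵥ x) = ∑ i, x i * (B *ᵥ x) i := rfl
      _ = ∑ i, (x i * (∑ s, p s * (μv s i * (μv s ⬝ᵥ x)))
            - (∑ s, p s * (μv s ⬝ᵥ x)) * ((∑ s, p s * μv s i) * x i)) := by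
          refine Finset.sum_congr rfl fun i _ => ?_
          rw [hBx i]; ring
      _ = (∑ i, x i * (∑ s, p s * (μv s i * (μv s ⬝ᵥ x))))
            - (∑ s, p s * (μv s ⬝ᵥ x)) * ∑ i, (∑ s, p s * μv s i) * x i := by
          rw [Finset.sum_sub_distrib, ← Finset.mul_sum]
      _ = _ := by rw [e3, e2 x]
  have hVXpd : VarX.PosDef := by
    have hVW : VarX = (∑ s, p s • Sig s) + B := by
      apply Matrix.ext; intro i j
      rw [Matrix.add_apply, hVe i j, hB]
      simp only [Matrix.of_apply, Matrix.sum_apply, Matrix.smul_apply, smul_eq_mul]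
    rw [hVW]
    refine hWpd.add_posSemidef ?_
    rw [posSemidef_iff_dotProduct_mulVec]
    constructor
    · show Bᴴ = B
      apply Matrix.ext; intro i j
      simp only [Matrix.conjTranspose_apply, hB, Matrix.of_apply, star_trivial]
      have h6 : ∑ s, p s * (μv s j * μv s i) = ∑ s, p s * (μv s i * μv s j) :=
        Finset.sum_congr rfl fun s _ => by ring
      rw [h6]; ring
    · intro x
      have hxs : star x = x := by funext i; simp
      rw [hxs, hBq x]
      have hcs := sum_sq_le_sum_mul_sum_of_sq_eq_mul Finset.univ
        (r := fun s => p s * (μv s ⬝ᵥ x)) (f := p)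
        (g := fun s => p s * ((μv s ⬝ᵥ x) * (μv s ⬝ᵥ x)))
        (fun s _ => (hp s).le)
        (fun s _ => mul_nonneg (hp s).le (mul_self_nonneg _))
        (fun s _ => by ring)
      rw [hpsum, one_mul] at hcs
      have h2 : (∑ s, p s * (μv s ⬝ᵥ x)) * (∑ s, p s * (μv s ⬝ᵥ x))
          = (∑ s, p s * (μv s ⬝ᵥ x)) ^ 2 := by ring
      linarith
  -- ## the normal equation for the pooled regression
  have hnormal : ∀ i, covXY i = (∑ j, VarX i j * b0 j) + (∑ k, covXU i k * δ k) := by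
    intro i
    have hYd : ∀ ω, Y ω = a0 + (∑ k, δ k * U k ω) + (∑ j, b0 j * X ω j) - Rf ω := by
      intro ω; simp only [hRf, dotProduct]; ring
    have h1 : (fun ω => X ω i * Y ω)
        = fun ω => (a0 * X ω i + ((∑ k, δ k * (X ω i * U k ω))
            + ∑ j, b0 j * (X ω i * X ω j))) - Rf ω * X ω i := by
      funext ω
      have ea : X ω i * (∑ k, δ k * U k ω) = ∑ k, δ k * (X ω i * U k ω) := by
        rw [Finset.mul_sum]; exact Finset.sum_congr rfl fun k _ => by ring
      have eb : X ω i * (∑ j, b0 j * X ω j) = ∑ j, b0 j * (X ω i * X ω j) := by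
        rw [Finset.mul_sum]; exact Finset.sum_congr rfl fun j _ => by ring
      rw [hYd ω, mul_sub, mul_add, mul_add, ea, eb]
      ring
    have hIa : Integrable (fun ω => a0 * X ω i) P := (hXint i).const_mul a0
    have hIb : Integrable (fun ω => ∑ k, δ k * (X ω i * U k ω)) P :=
      integrable_finset_sum _ fun k _ => (hXU i k).const_mul (δ k)
    have hIc : Integrable (fun ω => ∑ j, b0 j * (X ω i * X ω j)) P :=
      integrable_finset_sum _ fun j _ => (hXX i j).const_mul (b0 j)
    have hIbc : Integrable (fun ω => (∑ k, δ k * (X ω i * U k ω))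
        + ∑ j, b0 j * (X ω i * X ω j)) P := hIb.add hIc
    have hIabc : Integrable (fun ω => a0 * X ω i + ((∑ k, δ k * (X ω i * U k ω))
        + ∑ j, b0 j * (X ω i * X ω j))) P := hIa.add hIbc
    have h2 : ∫ ω, X ω i * Y ω ∂P
        = a0 * (∫ ω, X ω i ∂P) + ((∑ k, δ k * ∫ ω, X ω i * U k ω ∂P)
            + ∑ j, b0 j * ∫ ω, X ω i * X ω j ∂P) := by
      rw [h1, integral_sub hIabc (hRX i), horthX i, sub_zero, integral_add hIa hIbc,
        integral_add hIb hIc, integral_const_mul,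
        integral_finset_sum _ (fun k _ => (hXU i k).const_mul (δ k)),
        integral_finset_sum _ (fun j _ => (hXX i j).const_mul (b0 j))]
      rw [Finset.sum_congr rfl fun k (_ : k ∈ Finset.univ) =>
        integral_const_mul (δ k) (fun ω => X ω i * U k ω)]
      rw [Finset.sum_congr rfl fun j (_ : j ∈ Finset.univ) =>
        integral_const_mul (b0 j) (fun ω => X ω i * X ω j)]
    have h3 : (fun ω => Y ω) = fun ω =>
        (a0 + ((∑ k, δ k * U k ω) + ∑ j, b0 j * X ω j)) - Rf ω := by
      funext ω; rw [hYd ω]; ring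
    have hJb : Integrable (fun ω => ∑ k, δ k * U k ω) P :=
      integrable_finset_sum _ fun k _ => (hUint k).const_mul (δ k)
    have hJc : Integrable (fun ω => ∑ j, b0 j * X ω j) P :=
      integrable_finset_sum _ fun j _ => (hXint j).const_mul (b0 j)
    have hJbc : Integrable (fun ω => (∑ k, δ k * U k ω) + ∑ j, b0 j * X ω j) P := hJb.add hJc
    have hJabc : Integrable (fun ω => a0 + ((∑ k, δ k * U k ω) + ∑ j, b0 j * X ω j)) P :=
      (integrable_const a0).add hJbc
    have h4 : ∫ ω, Y ω ∂P = a0 + ((∑ k, δ k * ∫ ω, U k ω ∂P)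
        + ∑ j, b0 j * ∫ ω, X ω j ∂P) := by
      rw [h3, integral_sub hJabc hRint, horthc, sub_zero,
        integral_add (integrable_const a0) hJbc, integral_add hJb hJc,
        integral_finset_sum _ (fun k _ => (hUint k).const_mul (δ k)),
        integral_finset_sum _ (fun j _ => (hXint j).const_mul (b0 j)), integral_const]
      rw [Finset.sum_congr rfl fun k (_ : k ∈ Finset.univ) =>
        integral_const_mul (δ k) (fun ω => U k ω)]
      rw [Finset.sum_congr rfl fun j (_ : j ∈ Finset.univ) =>
        integral_const_mul (b0 j) (fun ω => X ω j)]
      simp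
    rw [hcovXY i, h2, h4]
    have r1 : ∑ j, VarX i j * b0 j
        = (∑ j, b0 j * ∫ ω, X ω i * X ω j ∂P)
          - (∫ ω, X ω i ∂P) * ∑ j, b0 j * ∫ ω, X ω j ∂P := by
      have hh : ∀ j : Fin d, VarX i j * b0 j
          = b0 j * ∫ ω, X ω i * X ω j ∂P
            - (∫ ω, X ω i ∂P) * (b0 j * ∫ ω, X ω j ∂P) := by
        intro j; rw [hVarX i j]; ring
      rw [Finset.sum_congr rfl fun j _ => hh j, Finset.sum_sub_distrib, ← Finset.mul_sum]
    have r2 : ∑ k, covXU i k * δ k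
        = (∑ k, δ k * ∫ ω, X ω i * U k ω ∂P)
          - (∫ ω, X ω i ∂P) * ∑ k, δ k * ∫ ω, U k ω ∂P := by
      have hh : ∀ k : Fin n, covXU i k * δ k
          = δ k * ∫ ω, X ω i * U k ω ∂P
            - (∫ ω, X ω i ∂P) * (δ k * ∫ ω, U k ω ∂P) := by
        intro k; rw [hcovXU i k]; ring
      rw [Finset.sum_congr rfl fun k _ => hh k, Finset.sum_sub_distrib, ← Finset.mul_sum]
    rw [r1, r2]
    ring
  -- ## conclusion
  constructor
  · have hnv : covXY = VarX *ᵥ b0 + covXU *ᵥ δ := by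
      funext i
      rw [Pi.add_apply, hnormal i]
      rfl
    rw [hβPool, hnv, Matrix.mulVec_add, Matrix.mulVec_mulVec, Matrix.mulVec_mulVec,
      Matrix.nonsing_inv_mul _ hVXpd.det_pos.ne'.isUnit, Matrix.one_mulVec, hb0, hΛ]
  · intro k
    have h1 := hEall k.castSucc
    have h2 := hEall (Fin.last n)
    simp only [hE] at h1 h2
    have hs1 : ∑ j, δ j * ((if k.castSucc = j.castSucc then (1:ℝ) else 0) - p j.castSucc)
        = δ k - ∑ j, δ j * p j.castSucc := by
      have hh : ∀ j : Fin n,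
          δ j * ((if k.castSucc = j.castSucc then (1:ℝ) else 0) - p j.castSucc)
            = (if j = k then δ j else 0) - δ j * p j.castSucc := by
        intro j
        by_cases h : j = k
        · subst h; rw [if_pos rfl, if_pos rfl]; ring
        · rw [if_neg (fun hh => h (Fin.castSucc_inj.mp hh).symm), if_neg h]; ring
      rw [Finset.sum_congr rfl fun j _ => hh j, Finset.sum_sub_distrib,
        Finset.sum_ite_eq' Finset.univ k (fun j => δ j), if_pos (Finset.mem_univ _)]
    have hs2 : ∑ j, δ j * ((if Fin.last n = j.castSucc then (1:ℝ) else 0) - p j.castSucc)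
        = - ∑ j, δ j * p j.castSucc := by
      have hh : ∀ j : Fin n,
          δ j * ((if Fin.last n = j.castSucc then (1:ℝ) else 0) - p j.castSucc)
            = -(δ j * p j.castSucc) := by
        intro j
        rw [if_neg (Fin.castSucc_lt_last j).ne']
        ring
      rw [Finset.sum_congr rfl fun j _ => hh j]
      exact Finset.sum_neg_distrib _
    rw [hs1] at h1
    rw [hs2] at h2
    rw [← hb0]
    have hdp : b0 ⬝ᵥ (μv k.castSucc - μv (Fin.last n))
        = b0 ⬝ᵥ μv k.castSucc - b0 ⬝ᵥ μv (Fin.last n) := dotProduct_sub b0 _ _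
    rw [hdp]
    linarith
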